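/- There exists X ∈ m such that the projection of [f₃X, f₃²X] onto m along h is nonzero: [f₃X, f₃²X]_m ≠ 0. Consequently f₃ fails the nearly Kähler bracket condition. -/

import Mathlib

namespace SO4

/-- The matrix `E_{pq}` with `1` in position `(p,q)` and `0` elsewhere (indices `0,…,3`
correspond to the paper's `1,…,4`). -/
def E (p q : Fin 4) : Matrix (Fin 4) (Fin 4) ℝ := Matrix.single p q 1

/-- The element of `m` with coordinates `(a, b₁, b₂, c₁, c₂)`. -/
noncomputable def M (a b1 b2 c1 c2 : ℝ) : Matrix (Fin 4) (Fin 4) ℝ :=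
  a • (E 0 1 - E 1 0) + b1 • (E 0 2 - E 2 0) + b2 • (E 0 3 - E 3 0) +
    c1 • (E 1 2 - E 2 1) + c2 • (E 1 3 - E 3 1)

/-- `h = span{E₃₄ − E₄₃}`, the embedded `so(2)`. -/
def hsub : Submodule ℝ (Matrix (Fin 4) (Fin 4) ℝ) := Submodule.span ℝ {E 2 3 - E 3 2}

/-- `m₁ = span{E₁₂ − E₂₁}`. -/
def m1 : Submodule ℝ (Matrix (Fin 4) (Fin 4) ℝ) := Submodule.span ℝ {E 0 1 - E 1 0}

/-- `m₂ = span{E₁₃ − E₃₁, E₁₄ − E₄₁}`. -/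
def m2 : Submodule ℝ (Matrix (Fin 4) (Fin 4) ℝ) :=
  Submodule.span ℝ {E 0 2 - E 2 0, E 0 3 - E 3 0}

/-- `m₃ = span{E₂₃ − E₃₂, E₂₄ − E₄₂}`. -/
def m3 : Submodule ℝ (Matrix (Fin 4) (Fin 4) ℝ) :=
  Submodule.span ℝ {E 1 2 - E 2 1, E 1 3 - E 3 1}

/-- `m = m₁ ⊕ m₂ ⊕ m₃`. -/
def msum : Submodule ℝ (Matrix (Fin 4) (Fin 4) ℝ) := m1 ⊔ m2 ⊔ m3

/-- The projection of `X ∈ so(4)` onto `m` along `h` (read off the coordinates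
`a = X₁₂, b₁ = X₁₃, b₂ = X₁₄, c₁ = X₂₃, c₂ = X₂₄`). -/
noncomputable def projm (X : Matrix (Fin 4) (Fin 4) ℝ) : Matrix (Fin 4) (Fin 4) ℝ :=
  M (X 0 1) (X 0 2) (X 0 3) (X 1 2) (X 1 3)

/-- The `m₁`-component of `X ∈ m`. -/
noncomputable def P1 (X : Matrix (Fin 4) (Fin 4) ℝ) : Matrix (Fin 4) (Fin 4) ℝ :=
  M (X 0 1) 0 0 0 0

/-- The `m₂`-component of `X ∈ m`. -/
noncomputable def P2 (X : Matrix (Fin 4) (Fin 4) ℝ) : Matrix (Fin 4) (Fin 4) ℝ :=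
  M 0 (X 0 2) (X 0 3) 0 0

/-- The `m₃`-component of `X ∈ m`. -/
noncomputable def P3 (X : Matrix (Fin 4) (Fin 4) ℝ) : Matrix (Fin 4) (Fin 4) ℝ :=
  M 0 0 0 (X 1 2) (X 1 3)

/-- `f₁(a,b₁,b₂,c₁,c₂) = (0, b₂, −b₁, 0, 0)`, acting on `m`. -/
noncomputable def f1 (X : Matrix (Fin 4) (Fin 4) ℝ) : Matrix (Fin 4) (Fin 4) ℝ :=
  M 0 (X 0 3) (-(X 0 2)) 0 0

/-- `f₂(a,b₁,b₂,c₁,c₂) = (0, 0, 0, c₂, −c₁)`, acting on `m`. -/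
noncomputable def f2 (X : Matrix (Fin 4) (Fin 4) ℝ) : Matrix (Fin 4) (Fin 4) ℝ :=
  M 0 0 0 (X 1 3) (-(X 1 2))

/-- `f₃(a,b₁,b₂,c₁,c₂) = (0, b₂, −b₁, c₂, −c₁)`, acting on `m`. -/
noncomputable def f3 (X : Matrix (Fin 4) (Fin 4) ℝ) : Matrix (Fin 4) (Fin 4) ℝ :=
  M 0 (X 0 3) (-(X 0 2)) (X 1 3) (-(X 1 2))

/-- `f₄(a,b₁,b₂,c₁,c₂) = (0, b₂, −b₁, −c₂, c₁)`, acting on `m`. -/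
noncomputable def f4 (X : Matrix (Fin 4) (Fin 4) ℝ) : Matrix (Fin 4) (Fin 4) ℝ :=
  M 0 (X 0 3) (-(X 0 2)) (-(X 1 3)) (X 1 2)

end SO4

open SO4 in
/-- there exists `X ∈ m` such that the projection of `[f₃X, f₃²X]` onto `m`
along `h` is nonzero, so `f₃` fails the nearly Kähler bracket condition. -/
theorem statement12 :
    ∃ X ∈ msum, projm ⁅f3 X, f3 (f3 X)⁆ ≠ 0 := by
  refine ⟨M 0 1 0 0 1, ?_, ?_⟩
  · have h1 : M 0 1 0 0 1 = (E 0 2 - E 2 0) + (E 1 3 - E 3 1) := by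
      simp [M]
    rw [h1]
    refine Submodule.add_mem _ ?_ ?_
    · exact Submodule.mem_sup_left (Submodule.mem_sup_right
        (Submodule.subset_span (by simp)))
    · exact Submodule.mem_sup_right (Submodule.subset_span (by simp))
  · intro h
    have key : projm ⁅f3 (M 0 1 0 0 1), f3 (f3 (M 0 1 0 0 1))⁆ 0 1 = -2 := by
      simp [projm, f3, M, E, Ring.lie_def, Matrix.mul_apply, Fin.sum_univ_four,
        Matrix.single]
      norm_num
    rw [h] at key
    norm_num at key
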